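/- Let a ≤ b be naturals, set L = b − a + 1, and let M be the family of dyadic intervals contained in [a, b] that are maximal under set inclusion among all dyadic intervals contained in [a, b]. Then for each natural k, at most two members of M have cardinality 2^k; every member of M has cardinality at most 2^{⌊log₂ L⌋}; and consequently |M| ≤ 2·(⌊log₂ L⌋ + 1). -/

import Mathlib

/-- The dyadic interval `D(c, k) = {c·2^k, c·2^k + 1, …, (c+1)·2^k − 1}`. -/
def dyadic (c k : ℕ) : Finset ℕ :=
  Finset.Ico (c * 2 ^ k) ((c + 1) * 2 ^ k)

lemma dyadic_card (c k : ℕ) : (dyadic c k).card = 2 ^ k := by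
  have e : (c + 1) * 2 ^ k = c * 2 ^ k + 2 ^ k := by ring
  simp [dyadic, Nat.card_Ico, e]

lemma dyadic_self_mem (c k : ℕ) : c * 2 ^ k ∈ dyadic c k := by
  have hp : 0 < 2 ^ k := pow_pos two_pos k
  have e : (c + 1) * 2 ^ k = c * 2 ^ k + 2 ^ k := by ring
  simp [dyadic, Finset.mem_Ico, e, hp]

lemma bounds_of_subset {a b c k : ℕ} (h : dyadic c k ⊆ Finset.Icc a b) :
    a ≤ c * 2 ^ k ∧ (c + 1) * 2 ^ k ≤ b + 1 := by
  have hp : 0 < 2 ^ k := pow_pos two_pos k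
  have e : (c + 1) * 2 ^ k = c * 2 ^ k + 2 ^ k := by ring
  have h1 := h (dyadic_self_mem c k)
  have h2 := h (show (c + 1) * 2 ^ k - 1 ∈ dyadic c k by
    simp [dyadic, Finset.mem_Ico, e]; omega)
  simp only [Finset.mem_Icc] at h1 h2
  omega

lemma dyadic_subset_Icc {a b c k : ℕ} (h1 : a ≤ c * 2 ^ k)
    (h2 : (c + 1) * 2 ^ k ≤ b + 1) : dyadic c k ⊆ Finset.Icc a b := by
  intro x hx
  simp only [dyadic, Finset.mem_Ico] at hx
  simp only [Finset.mem_Icc]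
  omega

lemma dyadic_between {a b c c' m k : ℕ} (h : dyadic c k ⊆ Finset.Icc a b)
    (h' : dyadic c' k ⊆ Finset.Icc a b) (h1 : c ≤ m) (h2 : m ≤ c') :
    dyadic m k ⊆ Finset.Icc a b := by
  obtain ⟨ha, -⟩ := bounds_of_subset h
  obtain ⟨-, hb⟩ := bounds_of_subset h'
  exact dyadic_subset_Icc (ha.trans (Nat.mul_le_mul_right _ h1))
    ((Nat.mul_le_mul_right _ (by omega)).trans hb)

lemma child_subset_left (m k : ℕ) : dyadic (2 * m) k ⊆ dyadic m (k + 1) := by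
  unfold dyadic
  apply Finset.Ico_subset_Ico
  · exact le_of_eq (by ring)
  · have e : (m + 1) * 2 ^ (k + 1) = (2 * m + 2) * 2 ^ k := by ring
    rw [e]
    exact Nat.mul_le_mul_right _ (by omega)

lemma child_subset_right (m k : ℕ) : dyadic (2 * m + 1) k ⊆ dyadic m (k + 1) := by
  unfold dyadic
  apply Finset.Ico_subset_Ico
  · have e : m * 2 ^ (k + 1) = 2 * m * 2 ^ k := by ring
    rw [e]
    exact Nat.mul_le_mul_right _ (by omega)
  · exact le_of_eq (by ring)

lemma parent_subset_Icc {a b m k : ℕ} (hl : dyadic (2 * m) k ⊆ Finset.Icc a b)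
    (hr : dyadic (2 * m + 1) k ⊆ Finset.Icc a b) :
    dyadic m (k + 1) ⊆ Finset.Icc a b := by
  obtain ⟨ha, -⟩ := bounds_of_subset hl
  obtain ⟨-, hb⟩ := bounds_of_subset hr
  apply dyadic_subset_Icc
  · calc a ≤ 2 * m * 2 ^ k := ha
      _ = m * 2 ^ (k + 1) := by ring
  · calc (m + 1) * 2 ^ (k + 1) = (2 * m + 1 + 1) * 2 ^ k := by ring
      _ ≤ b + 1 := hb

lemma dyadic_left_inj {c c' k : ℕ} (h : dyadic c k = dyadic c' k) : c = c' := by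
  have hp : 0 < 2 ^ k := pow_pos two_pos k
  have h1 := h ▸ dyadic_self_mem c k
  have h2 := h.symm ▸ dyadic_self_mem c' k
  simp only [dyadic, Finset.mem_Ico] at h1 h2
  have e1 : c' ≤ c := Nat.le_of_mul_le_mul_right h1.1 hp
  have e2 : c ≤ c' := Nat.le_of_mul_le_mul_right h2.1 hp
  omega

/-- **Size of the canonical dyadic decomposition.** Let `M` be the family of maximal
dyadic intervals contained in `[a, b]` and `L = b − a + 1`. Then `M` is finite, at most
two members of `M` have cardinality `2^k` for each `k`, every member has cardinality at
most `2^(⌊log₂ L⌋)`, and consequently `|M| ≤ 2 (⌊log₂ L⌋ + 1)`. -/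
theorem maximal_dyadic_decomposition_card (a b : ℕ) (hab : a ≤ b)
    (L : ℕ) (hL : L = b - a + 1)
    (M : Set (Finset ℕ))
    (hM : M = {D | (∃ c k, D = dyadic c k) ∧ D ⊆ Finset.Icc a b ∧
      ∀ D' : Finset ℕ, (∃ c k, D' = dyadic c k) → D' ⊆ Finset.Icc a b →
        D ⊆ D' → D = D'}) :
    M.Finite ∧
    (∀ k : ℕ, {D ∈ M | D.card = 2 ^ k}.ncard ≤ 2) ∧
    (∀ D ∈ M, D.card ≤ 2 ^ (Nat.log 2 L)) ∧
    M.ncard ≤ 2 * (Nat.log 2 L + 1) := by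
  subst hM hL
  set L := b - a + 1 with hLdef
  set ℓ := Nat.log 2 L with hl
  -- basic facts
  have hMfin : ({D | (∃ c k, D = dyadic c k) ∧ D ⊆ Finset.Icc a b ∧
      ∀ D' : Finset ℕ, (∃ c k, D' = dyadic c k) → D' ⊆ Finset.Icc a b →
        D ⊆ D' → D = D'} : Set (Finset ℕ)).Finite := by
    apply Set.Finite.subset (Finset.Icc a b).powerset.finite_toSet
    rintro D ⟨-, hsub, -⟩
    exact Finset.mem_coe.mpr (Finset.mem_powerset.mpr hsub)
  have hcardIcc : (Finset.Icc a b).card = L := by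
    rw [Nat.card_Icc]; omega
  have hsize : ∀ D ∈ ({D | (∃ c k, D = dyadic c k) ∧ D ⊆ Finset.Icc a b ∧
      ∀ D' : Finset ℕ, (∃ c k, D' = dyadic c k) → D' ⊆ Finset.Icc a b →
        D ⊆ D' → D = D'} : Set (Finset ℕ)),
      ∃ c k, D = dyadic c k ∧ D.card = 2 ^ k ∧ k ≤ ℓ := by
    rintro D ⟨⟨c, k, rfl⟩, hsub, -⟩
    refine ⟨c, k, rfl, dyadic_card c k, ?_⟩
    have h1 : 2 ^ k ≤ L := by
      rw [← hcardIcc, ← dyadic_card c k]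
      exact Finset.card_le_card hsub
    exact (Nat.le_log_iff_pow_le one_lt_two (by omega)).mpr h1
  -- key: no three maximal dyadic intervals of the same size
  have key : ∀ k c1 c2 c3 : ℕ, c1 < c2 → c2 < c3 →
      dyadic c1 k ⊆ Finset.Icc a b → dyadic c3 k ⊆ Finset.Icc a b →
      dyadic c2 k ∈ ({D | (∃ c k, D = dyadic c k) ∧ D ⊆ Finset.Icc a b ∧
        ∀ D' : Finset ℕ, (∃ c k, D' = dyadic c k) → D' ⊆ Finset.Icc a b →
          D ⊆ D' → D = D'} : Set (Finset ℕ)) → False := by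
    rintro k c1 c2 c3 h12 h23 hs1 hs3 ⟨-, hs2, hmax⟩
    have hpk : 0 < 2 ^ k := pow_pos two_pos k
    rcases Nat.even_or_odd c2 with ⟨m, hm⟩ | ⟨m, hm⟩
    · -- c2 = 2m, sibling 2m+1
      have hc2 : c2 = 2 * m := by omega
      rw [hc2] at hs2 hmax h12 h23
      have hsib : dyadic (2 * m + 1) k ⊆ Finset.Icc a b :=
        dyadic_between hs1 hs3 (by omega) (by omega)
      have hpar := parent_subset_Icc hs2 hsib
      have heq := hmax (dyadic m (k + 1)) ⟨m, k + 1, rfl⟩ hpar (child_subset_left m k)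
      have hcard := congrArg Finset.card heq
      rw [dyadic_card, dyadic_card, pow_succ] at hcard
      omega
    · -- c2 = 2m+1, sibling 2m
      rw [hm] at hs2 hmax h12 h23
      have hsib : dyadic (2 * m) k ⊆ Finset.Icc a b :=
        dyadic_between hs1 hs3 (by omega) (by omega)
      have hpar := parent_subset_Icc hsib hs2
      have heq := hmax (dyadic m (k + 1)) ⟨m, k + 1, rfl⟩ hpar (child_subset_right m k)
      have hcard := congrArg Finset.card heq
      rw [dyadic_card, dyadic_card, pow_succ] at hcard
      omega
  -- at most two maximal dyadic intervals of each size
  have key2 : ∀ k : ℕ, {D ∈ ({D | (∃ c k, D = dyadic c k) ∧ D ⊆ Finset.Icc a b ∧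
      ∀ D' : Finset ℕ, (∃ c k, D' = dyadic c k) → D' ⊆ Finset.Icc a b →
        D ⊆ D' → D = D'} : Set (Finset ℕ)) | D.card = 2 ^ k}.ncard ≤ 2 := by
    intro k
    by_contra hlt
    push_neg at hlt
    have hfin : ({D ∈ ({D | (∃ c k, D = dyadic c k) ∧ D ⊆ Finset.Icc a b ∧
        ∀ D' : Finset ℕ, (∃ c k, D' = dyadic c k) → D' ⊆ Finset.Icc a b →
          D ⊆ D' → D = D'} : Set (Finset ℕ)) | D.card = 2 ^ k}).Finite :=
      hMfin.subset (fun D hD => hD.1)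
    obtain ⟨D1, D2, D3, hD1, hD2, hD3, h12, h13, h23⟩ :=
      (Set.two_lt_ncard_iff hfin).mp hlt
    -- extract dyadic indices, all at level k
    have hext : ∀ D : Finset ℕ, D ∈ {D ∈ ({D | (∃ c k, D = dyadic c k) ∧
        D ⊆ Finset.Icc a b ∧
        ∀ D' : Finset ℕ, (∃ c k, D' = dyadic c k) → D' ⊆ Finset.Icc a b →
          D ⊆ D' → D = D'} : Set (Finset ℕ)) | D.card = 2 ^ k} →
        ∃ c, D = dyadic c k := by
      rintro D ⟨⟨⟨c, k', rfl⟩, -, -⟩, hcard⟩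
      rw [dyadic_card] at hcard
      have : k' = k := Nat.pow_right_injective le_rfl hcard
      exact ⟨c, by rw [this]⟩
    obtain ⟨c1, rfl⟩ := hext D1 hD1
    obtain ⟨c2, rfl⟩ := hext D2 hD2
    obtain ⟨c3, rfl⟩ := hext D3 hD3
    have hc12 : c1 ≠ c2 := fun h => h12 (by rw [h])
    have hc13 : c1 ≠ c3 := fun h => h13 (by rw [h])
    have hc23 : c2 ≠ c3 := fun h => h23 (by rw [h])
    have hm1 := hD1.1
    have hm2 := hD2.1
    have hm3 := hD3.1
    have hs1 : dyadic c1 k ⊆ Finset.Icc a b := hm1.2.1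
    have hs2 : dyadic c2 k ⊆ Finset.Icc a b := hm2.2.1
    have hs3 : dyadic c3 k ⊆ Finset.Icc a b := hm3.2.1
    rcases hc12.lt_or_gt with h | h <;> rcases hc13.lt_or_gt with h' | h' <;>
      rcases hc23.lt_or_gt with h'' | h''
    · exact key k c1 c2 c3 h h'' hs1 hs3 hm2
    · exact key k c1 c3 c2 h' h'' hs1 hs2 hm3
    · omega
    · exact key k c3 c1 c2 h' h hs3 hs2 hm1
    · exact key k c2 c1 c3 h h' hs2 hs3 hm1
    · omega
    · exact key k c2 c3 c1 h'' h' hs2 hs1 hm3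
    · exact key k c3 c2 c1 h'' h hs3 hs1 hm2
  refine ⟨hMfin, key2, ?_, ?_⟩
  · rintro D hD
    obtain ⟨c, k, rfl, hcard, hk⟩ := hsize D hD
    rw [hcard]
    exact Nat.pow_le_pow_right (by norm_num) hk
  · -- total bound
    classical
    set F := hMfin.toFinset with hF
    have hncard := Set.ncard_eq_toFinset_card _ hMfin
    rw [hncard]
    have hsubF : F ⊆ (Finset.range (ℓ + 1)).biUnion
        (fun k => F.filter (fun D => D.card = 2 ^ k)) := by
      intro D hD
      have hDM := hMfin.mem_toFinset.mp hD
      obtain ⟨c, k, -, hcard, hk⟩ := hsize D hDM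
      exact Finset.mem_biUnion.mpr ⟨k, Finset.mem_range.mpr (by omega),
        Finset.mem_filter.mpr ⟨hD, hcard⟩⟩
    have hfilt : ∀ k : ℕ, (F.filter (fun D => D.card = 2 ^ k)).card ≤ 2 := by
      intro k
      have hset : (↑(F.filter (fun D => D.card = 2 ^ k)) : Set (Finset ℕ)) =
          {D ∈ ({D | (∃ c k, D = dyadic c k) ∧ D ⊆ Finset.Icc a b ∧
            ∀ D' : Finset ℕ, (∃ c k, D' = dyadic c k) → D' ⊆ Finset.Icc a b →
              D ⊆ D' → D = D'} : Set (Finset ℕ)) | D.card = 2 ^ k} := by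
        ext D
        simp [hF, hMfin.mem_toFinset]
      have := key2 k
      rw [← hset, Set.ncard_coe_finset] at this
      exact this
    calc F.card ≤ ((Finset.range (ℓ + 1)).biUnion
          (fun k => F.filter (fun D => D.card = 2 ^ k))).card :=
        Finset.card_le_card hsubF
      _ ≤ ∑ k ∈ Finset.range (ℓ + 1), (F.filter (fun D => D.card = 2 ^ k)).card :=
        Finset.card_biUnion_le
      _ ≤ ∑ _k ∈ Finset.range (ℓ + 1), 2 :=
        Finset.sum_le_sum (fun k _ => hfilt k)
      _ = 2 * (ℓ + 1) := by
        rw [Finset.sum_const, Finset.card_range, smul_eq_mul, mul_comm]
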